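/- Existence of macroscopic s-sets: Let E ⊂ ℝ^d with ν^s(E) = Σ_n ν_n^s(E) = +∞. Then there exists a subset Ẽ ⊂ E such that Dim_H(Ẽ) = s and ν^s(Ẽ) < +∞. -/

import Mathlib

open Metric Set ENNReal MeasureTheory

noncomputable def shell (X : Type*) [NormedAddCommGroup X] (n : ℕ) : Set X :=
  if n = 0 then Metric.ball 0 1 else Metric.ball 0 ((2:ℝ)^n) \ Metric.ball 0 ((2:ℝ)^(n-1))

noncomputable def nuT {X : Type*} [NormedAddCommGroup X] (s : ℝ) (n : ℕ) (E : Set X) : ℝ≥0∞ :=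
  sInf { t : ℝ≥0∞ | ∃ (m : ℕ) (x : Fin m → X) (r : Fin m → ℝ),
    (∀ i, x i ∈ shell X n) ∧ (∀ i, 1 ≤ r i) ∧
    (E ∩ shell X n ⊆ ⋃ i, Metric.ball (x i) (r i)) ∧
    t = ∑ i, ENNReal.ofReal ((r i / 2^n)^s) }

noncomputable def macroDim {X : Type*} [NormedAddCommGroup X] (E : Set X) : ℝ :=
  sInf { s : ℝ | 0 ≤ s ∧ ∑' n, nuT s n E < ⊤ }

def IsIntegerPoint {d : ℕ} (x : EuclideanSpace ℝ (Fin d)) : Prop := ∀ j, ∃ z : ℤ, x j = (z : ℝ)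

def IsProperCover {d : ℕ} (n : ℕ) (E : Set (EuclideanSpace ℝ (Fin d))) {m : ℕ}
    (x : Fin m → EuclideanSpace ℝ (Fin d)) (r : Fin m → ℕ) : Prop :=
  (∀ i, x i ∈ shell (EuclideanSpace ℝ (Fin d)) n) ∧ (∀ i, IsIntegerPoint (x i)) ∧
  (∀ i, 1 ≤ r i) ∧ (E ∩ shell (EuclideanSpace ℝ (Fin d)) n ⊆ ⋃ i, Metric.ball (x i) ((r i : ℝ)))

noncomputable def nuP {d : ℕ} (s : ℝ) (n : ℕ) (E : Set (EuclideanSpace ℝ (Fin d))) : ℝ≥0∞ :=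
  sInf { t : ℝ≥0∞ | ∃ (m : ℕ) (x : Fin m → EuclideanSpace ℝ (Fin d)) (r : Fin m → ℕ),
    IsProperCover n E x r ∧ t = ∑ i, ENNReal.ofReal (((r i : ℝ) / 2^n)^s) }

namespace Stmt11Aux

variable {d : ℕ}

def CS (d : ℕ) (s : ℝ) (n : ℕ) (E : Set (EuclideanSpace ℝ (Fin d))) : Set ℝ≥0∞ :=
  { t : ℝ≥0∞ | ∃ (m : ℕ) (x : Fin m → EuclideanSpace ℝ (Fin d)) (r : Fin m → ℕ),
    IsProperCover n E x r ∧ t = ∑ i, ENNReal.ofReal (((r i : ℝ) / 2^n)^s) }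

lemma nuP_def (s : ℝ) (n : ℕ) (E : Set (EuclideanSpace ℝ (Fin d))) :
    nuP s n E = sInf (CS d s n E) := rfl

lemma CS_congr {s : ℝ} {n : ℕ} {A B : Set (EuclideanSpace ℝ (Fin d))}
    (h : A ∩ shell (EuclideanSpace ℝ (Fin d)) n = B ∩ shell (EuclideanSpace ℝ (Fin d)) n) :
    CS d s n A = CS d s n B := by
  unfold CS IsProperCover
  rw [h]

lemma nuP_congr {s : ℝ} {n : ℕ} {A B : Set (EuclideanSpace ℝ (Fin d))}
    (h : A ∩ shell (EuclideanSpace ℝ (Fin d)) n = B ∩ shell (EuclideanSpace ℝ (Fin d)) n) :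
    nuP s n A = nuP s n B := by
  rw [nuP_def, nuP_def, CS_congr h]

lemma nuP_mono {s : ℝ} {n : ℕ} {A B : Set (EuclideanSpace ℝ (Fin d))} (hAB : A ⊆ B) :
    nuP s n A ≤ nuP s n B := by
  rw [nuP_def, nuP_def]
  apply sInf_le_sInf
  rintro t ⟨m, x, r, ⟨h1, h2, h3, h4⟩, rfl⟩
  exact ⟨m, x, r, ⟨h1, h2, h3,
    subset_trans (inter_subset_inter_left _ hAB) h4⟩, rfl⟩

lemma nuP_of_inter_empty {s : ℝ} {n : ℕ} {A : Set (EuclideanSpace ℝ (Fin d))}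
    (h : A ∩ shell (EuclideanSpace ℝ (Fin d)) n = ∅) : nuP s n A = 0 := by
  refine le_antisymm ?_ zero_le
  rw [nuP_def]
  refine sInf_le ⟨0, Fin.elim0, Fin.elim0,
    ⟨fun i => i.elim0, fun i => i.elim0, fun i => i.elim0, by rw [h]; exact empty_subset _⟩, by simp⟩

lemma nuP_empty {s : ℝ} {n : ℕ} : nuP s n (∅ : Set (EuclideanSpace ℝ (Fin d))) = 0 :=
  nuP_of_inter_empty (by simp)

lemma one_le_nuP_zero {n : ℕ} {A : Set (EuclideanSpace ℝ (Fin d))}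
    (h : (A ∩ shell (EuclideanSpace ℝ (Fin d)) n).Nonempty) : 1 ≤ nuP 0 n A := by
  rw [nuP_def]
  refine le_sInf ?_
  rintro t ⟨m, x, r, ⟨h1, h2, h3, h4⟩, rfl⟩
  obtain ⟨p, hp⟩ := h
  obtain ⟨_, ⟨i, rfl⟩, _⟩ := h4 hp
  have : ∀ i : Fin m, ENNReal.ofReal (((r i : ℝ) / 2^n)^(0:ℝ)) = 1 := by
    intro i; rw [Real.rpow_zero]; simp
  rw [Finset.sum_congr rfl (fun i _ => this i)]
  rw [Finset.sum_const]
  simp only [Finset.card_univ, Fintype.card_fin, nsmul_eq_mul, mul_one]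
  exact_mod_cast Nat.one_le_cast.2 (Nat.one_le_iff_ne_zero.2 (by rintro rfl; exact i.elim0))

lemma nuP_union_ball {s : ℝ} {n : ℕ} {A B : Set (EuclideanSpace ℝ (Fin d))}
    {q : EuclideanSpace ℝ (Fin d)} {R : ℕ}
    (hq : q ∈ shell (EuclideanSpace ℝ (Fin d)) n) (hqi : IsIntegerPoint q) (hR : 1 ≤ R)
    (hB : B ∩ shell (EuclideanSpace ℝ (Fin d)) n ⊆
      (A ∩ shell (EuclideanSpace ℝ (Fin d)) n) ∪ Metric.ball q ((R : ℝ))) :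
    nuP s n B ≤ nuP s n A + ENNReal.ofReal (((R:ℝ)/2^n)^s) := by
  set c := ENNReal.ofReal (((R:ℝ)/2^n)^s) with hc
  have key : ∀ u ∈ CS d s n A, nuP s n B ≤ u + c := by
    rintro u ⟨m, x, r, ⟨h1, h2, h3, h4⟩, rfl⟩
    rw [nuP_def]
    refine sInf_le ⟨m+1, Fin.cons q x, Fin.cons R r, ⟨?_, ?_, ?_, ?_⟩, ?_⟩
    · intro i; refine Fin.cases ?_ ?_ i; · exact hq
      · intro j; simpa using h1 j
    · intro i; refine Fin.cases ?_ ?_ i; · exact hqi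
      · intro j; simpa using h2 j
    · intro i; refine Fin.cases ?_ ?_ i; · simpa using hR
      · intro j; simpa using h3 j
    · intro p hp
      rcases hB hp with hp' | hp'
      · obtain ⟨_, ⟨i, rfl⟩, hi⟩ := h4 hp'
        exact mem_iUnion.2 ⟨i.succ, by simpa using hi⟩
      · exact mem_iUnion.2 ⟨0, by simpa using hp'⟩
    · rw [Fin.sum_univ_succ]
      simp only [Fin.cons_zero, Fin.cons_succ]
      rw [add_comm]
  calc nuP s n B ≤ ⨅ u ∈ CS d s n A, u + c := le_iInf₂ key
  _ = sInf (CS d s n A) + c := ENNReal.sInf_add.symm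
  _ = nuP s n A + c := by rw [nuP_def]

lemma sum_rpow_superadd {ι : Type*} (S : Finset ι) (f : ι → ℝ≥0∞) {θ : ℝ}
    (h0 : 0 < θ) (h1 : θ ≤ 1) : (∑ i ∈ S, f i) ^ θ ≤ ∑ i ∈ S, (f i) ^ θ := by
  induction S using Finset.cons_induction with
  | empty => simp [ENNReal.zero_rpow_of_pos h0]
  | cons a S ha ih =>
    rw [Finset.sum_cons, Finset.sum_cons]
    exact le_trans (ENNReal.rpow_add_le_add_rpow _ _ h0.le h1) (by gcongr)

lemma rpow_nuP_le {s t : ℝ} (ht : 0 < t) (hts : t ≤ s) (n : ℕ)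
    (A : Set (EuclideanSpace ℝ (Fin d))) : (nuP s n A) ^ (t/s) ≤ nuP t n A := by
  have hs : 0 < s := lt_of_lt_of_le ht hts
  have hθ0 : 0 < t/s := div_pos ht hs
  have hθ1 : t/s ≤ 1 := (div_le_one hs).2 hts
  rw [nuP_def t]
  refine le_sInf ?_
  rintro u ⟨m, x, r, hc, rfl⟩
  have hv : nuP s n A ≤ ∑ i, ENNReal.ofReal (((r i : ℝ) / 2^n)^s) := by
    rw [nuP_def]; exact sInf_le ⟨m, x, r, hc, rfl⟩
  calc (nuP s n A) ^ (t/s)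
      ≤ (∑ i, ENNReal.ofReal (((r i : ℝ) / 2^n)^s)) ^ (t/s) :=
        ENNReal.rpow_le_rpow hv hθ0.le
    _ ≤ ∑ i, (ENNReal.ofReal (((r i : ℝ) / 2^n)^s)) ^ (t/s) :=
        sum_rpow_superadd _ _ hθ0 hθ1
    _ = ∑ i, ENNReal.ofReal (((r i : ℝ) / 2^n)^t) := by
        refine Finset.sum_congr rfl (fun i _ => ?_)
        have hb : (0:ℝ) ≤ (r i : ℝ) / 2^n := by positivity
        rw [ENNReal.ofReal_rpow_of_nonneg (Real.rpow_nonneg hb s) hθ0.le,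
          ← Real.rpow_mul hb]
        congr 1
        field_simp





lemma mem_shell_succ {X' : Type*} [NormedAddCommGroup X'] {k : ℕ} {x : X'} :
    x ∈ shell X' (k+1) ↔ ‖x‖ < 2^(k+1) ∧ 2^k ≤ ‖x‖ := by
  unfold shell
  rw [if_neg (Nat.succ_ne_zero k)]
  simp [mem_diff, mem_ball_zero_iff, not_lt, and_comm]

lemma mem_shell_zero {X' : Type*} [NormedAddCommGroup X'] {x : X'} :
    x ∈ shell X' 0 ↔ ‖x‖ < 1 := by
  unfold shell; rw [if_pos rfl]; exact mem_ball_zero_iff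

lemma shell_subset_ball {X' : Type*} [NormedAddCommGroup X'] (n : ℕ) :
    shell X' n ⊆ Metric.ball 0 ((2:ℝ)^n) := by
  unfold shell; split
  · next h => subst h; norm_num
  · exact diff_subset

lemma shell_disjoint {X' : Type*} [NormedAddCommGroup X'] {a b : ℕ} (hab : a < b) :
    shell X' a ∩ shell X' b = ∅ := by
  obtain ⟨k, rfl⟩ : ∃ k, b = k + 1 := ⟨b-1, (Nat.succ_pred_eq_of_pos (Nat.lt_of_le_of_lt (Nat.zero_le a) hab)).symm⟩
  apply eq_empty_of_forall_notMem
  rintro x ⟨hx1, hx2⟩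
  have h1 : ‖x‖ < (2:ℝ)^a := mem_ball_zero_iff.1 (shell_subset_ball a hx1)
  have h2 : (2:ℝ)^k ≤ ‖x‖ := (mem_shell_succ.1 hx2).2
  have h3 : (2:ℝ)^a ≤ 2^k := pow_le_pow_right₀ one_le_two (Nat.lt_succ_iff.1 hab)
  linarith

lemma abs_coord_le_norm (x : EuclideanSpace ℝ (Fin d)) (j : Fin d) : |x j| ≤ ‖x‖ := by
  rw [EuclideanSpace.norm_eq, ← Real.sqrt_sq_eq_abs]
  apply Real.sqrt_le_sqrt
  calc (x j)^2 = ‖x j‖^2 := by rw [Real.norm_eq_abs, sq_abs]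
  _ ≤ ∑ i, ‖x i‖^2 := Finset.single_le_sum (f := fun i => ‖x i‖^2) (fun i _ => sq_nonneg _) (Finset.mem_univ j)

lemma norm_le_norm_of_abs_le {x y : EuclideanSpace ℝ (Fin d)} (h : ∀ j, |x j| ≤ |y j|) :
    ‖x‖ ≤ ‖y‖ := by
  rw [EuclideanSpace.norm_eq, EuclideanSpace.norm_eq]
  apply Real.sqrt_le_sqrt
  apply Finset.sum_le_sum
  intro i _
  rw [Real.norm_eq_abs, Real.norm_eq_abs]
  exact pow_le_pow_left₀ (abs_nonneg _) (h i) 2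

lemma dist_le_sqrt_of_coords {x y : EuclideanSpace ℝ (Fin d)} (h : ∀ j, |x j - y j| ≤ 1) :
    dist x y ≤ Real.sqrt d := by
  rw [EuclideanSpace.dist_eq]
  apply Real.sqrt_le_sqrt
  calc ∑ i, dist (x i) (y i)^2 ≤ ∑ _i : Fin d, (1:ℝ) := by
        apply Finset.sum_le_sum
        intro i _
        rw [Real.dist_eq]
        nlinarith [h i, abs_nonneg (x i - y i)]
  _ = d := by simp

lemma exists_round_up (p : EuclideanSpace ℝ (Fin d)) :
    ∃ q : EuclideanSpace ℝ (Fin d), IsIntegerPoint q ∧ dist p q ≤ Real.sqrt d ∧ ‖p‖ ≤ ‖q‖ := by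
  classical
  set q : EuclideanSpace ℝ (Fin d) :=
    (WithLp.equiv 2 (Fin d → ℝ)).symm (fun j => if 0 ≤ p j then (⌈p j⌉ : ℝ) else (⌊p j⌋ : ℝ)) with hq
  have hqj : ∀ j, q j = if 0 ≤ p j then (⌈p j⌉ : ℝ) else (⌊p j⌋ : ℝ) := fun j => rfl
  refine ⟨q, ?_, ?_, ?_⟩
  · intro j
    rw [hqj j]
    split
    · exact ⟨⌈p j⌉, rfl⟩
    · exact ⟨⌊p j⌋, rfl⟩
  · apply dist_le_sqrt_of_coords
    intro j
    rw [hqj j]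
    split
    · rw [abs_le]
      constructor
      · linarith [Int.ceil_lt_add_one (p j)]
      · linarith [Int.le_ceil (p j)]
    · rw [abs_le]
      constructor
      · linarith [Int.floor_le (p j)]
      · linarith [Int.lt_floor_add_one (p j)]
  · apply norm_le_norm_of_abs_le
    intro j
    rw [hqj j]
    split
    · next h =>
      rw [abs_of_nonneg h, abs_of_nonneg (le_trans h (Int.le_ceil (p j)))]
      exact Int.le_ceil (p j)
    · next h =>
      push_neg at h
      rw [abs_of_neg h, abs_of_nonpos (le_trans (Int.floor_le (p j)) h.le)]
      exact neg_le_neg (Int.floor_le (p j))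

lemma exists_round_down (p : EuclideanSpace ℝ (Fin d)) :
    ∃ q : EuclideanSpace ℝ (Fin d), IsIntegerPoint q ∧ dist p q ≤ Real.sqrt d ∧ ‖q‖ ≤ ‖p‖ := by
  classical
  set q : EuclideanSpace ℝ (Fin d) :=
    (WithLp.equiv 2 (Fin d → ℝ)).symm (fun j => if 0 ≤ p j then (⌊p j⌋ : ℝ) else (⌈p j⌉ : ℝ)) with hq
  have hqj : ∀ j, q j = if 0 ≤ p j then (⌊p j⌋ : ℝ) else (⌈p j⌉ : ℝ) := fun j => rfl
  refine ⟨q, ?_, ?_, ?_⟩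
  · intro j
    rw [hqj j]
    split
    · exact ⟨⌊p j⌋, rfl⟩
    · exact ⟨⌈p j⌉, rfl⟩
  · apply dist_le_sqrt_of_coords
    intro j
    rw [hqj j]
    split
    · rw [abs_le]
      constructor
      · linarith [Int.floor_le (p j)]
      · linarith [Int.lt_floor_add_one (p j)]
    · rw [abs_le]
      constructor
      · linarith [Int.ceil_lt_add_one (p j)]
      · linarith [Int.le_ceil (p j)]
  · apply norm_le_norm_of_abs_le
    intro j
    rw [hqj j]
    split
    · next h =>
      rw [abs_of_nonneg h, abs_of_nonneg (by exact_mod_cast Int.floor_nonneg.2 h : (0:ℝ) ≤ (⌊p j⌋ : ℝ))]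
      exact Int.floor_le (p j)
    · next h =>
      push_neg at h
      have hc0 : ⌈p j⌉ ≤ (0:ℤ) := Int.ceil_le.2 (by rw [Int.cast_zero]; exact h.le)
      have hc : (⌈p j⌉ : ℝ) ≤ 0 := by exact_mod_cast hc0
      rw [abs_of_neg h, abs_of_nonpos hc]
      exact neg_le_neg (Int.le_ceil (p j))

lemma exists_integer_point_near {n : ℕ} (hn1 : 1 ≤ n) (hn2 : 2 * Real.sqrt d ≤ (2:ℝ)^(n-1))
    {p : EuclideanSpace ℝ (Fin d)} (hp : p ∈ shell (EuclideanSpace ℝ (Fin d)) n) :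
    ∃ q, IsIntegerPoint q ∧ q ∈ shell (EuclideanSpace ℝ (Fin d)) n ∧ dist p q ≤ Real.sqrt d := by
  obtain ⟨k, rfl⟩ : ∃ k, n = k + 1 := ⟨n-1, (Nat.succ_pred_eq_of_pos hn1).symm⟩
  rw [Nat.add_sub_cancel] at hn2
  rw [mem_shell_succ] at hp
  rcases lt_or_ge (‖p‖ + Real.sqrt d) ((2:ℝ)^(k+1)) with hcase | hcase
  · obtain ⟨q, hqi, hqd, hqn⟩ := exists_round_up p
    refine ⟨q, hqi, mem_shell_succ.2 ⟨?_, le_trans hp.2 hqn⟩, hqd⟩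
    have h1 : ‖q‖ - ‖p‖ ≤ ‖q - p‖ := norm_sub_norm_le q p
    have h2 : dist p q = ‖q - p‖ := by rw [dist_eq_norm, norm_sub_rev]
    linarith
  · obtain ⟨q, hqi, hqd, hqn⟩ := exists_round_down p
    refine ⟨q, hqi, mem_shell_succ.2 ⟨lt_of_le_of_lt hqn hp.1, ?_⟩, hqd⟩
    have h1 : ‖p‖ - ‖q‖ ≤ ‖p - q‖ := norm_sub_norm_le p q
    have h2 : dist p q = ‖p - q‖ := dist_eq_norm p q
    have h3 : (2:ℝ)^(k+1) = 2^k * 2 := pow_succ 2 k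
    linarith

lemma sqrt_d_lt : Real.sqrt d < (d:ℝ) + 1 := by
  have h1 : Real.sqrt d < Real.sqrt (((d:ℝ)+1)^2) := by
    apply Real.sqrt_lt_sqrt (by positivity)
    nlinarith [Nat.cast_nonneg (α := ℝ) d]
  rwa [Real.sqrt_sq (by positivity)] at h1

lemma exists_finite_cover {n : ℕ} (hn1 : 1 ≤ n) (hn2 : 2 * Real.sqrt d ≤ (2:ℝ)^(n-1)) :
    ∃ (M : ℕ) (q : Fin M → EuclideanSpace ℝ (Fin d)),
      (∀ i, q i ∈ shell (EuclideanSpace ℝ (Fin d)) n) ∧ (∀ i, IsIntegerPoint (q i)) ∧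
      shell (EuclideanSpace ℝ (Fin d)) n ⊆ ⋃ i, Metric.ball (q i) ((d:ℝ)+1) := by
  classical
  set Z := {q : EuclideanSpace ℝ (Fin d) |
    IsIntegerPoint q ∧ q ∈ shell (EuclideanSpace ℝ (Fin d)) n} with hZ
  have hZfin : Z.Finite := by
    have hT : (Set.univ.pi (fun _ : Fin d => Set.Icc (-(2^n : ℤ)) (2^n))).Finite :=
      Set.Finite.pi (fun _ => Set.finite_Icc _ _)
    refine Set.Finite.subset
      (hT.image (fun g => (WithLp.equiv 2 (Fin d → ℝ)).symm (fun j => (g j : ℝ)))) ?_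
    rintro q ⟨hqi, hqs⟩
    choose g hg using hqi
    refine ⟨g, fun j _ => ?_, ?_⟩
    · have h1 : |q j| ≤ ‖q‖ := abs_coord_le_norm q j
      have h2 : ‖q‖ < 2^n := mem_ball_zero_iff.1 (shell_subset_ball n hqs)
      rw [hg j] at h1
      have h3 : |(g j : ℝ)| ≤ (2:ℝ)^n := le_trans h1 h2.le
      rw [abs_le] at h3
      constructor
      · exact_mod_cast h3.1
      · exact_mod_cast h3.2
    · have heq : (WithLp.equiv 2 (Fin d → ℝ)) q = fun j => (g j : ℝ) := funext fun j => hg j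
      show (WithLp.equiv 2 (Fin d → ℝ)).symm (fun j => (g j : ℝ)) = q
      rw [← heq]
      exact (WithLp.equiv 2 _).symm_apply_apply q
  set l := hZfin.toFinset.toList with hl
  refine ⟨l.length, fun i => l.get i, ?_, ?_, ?_⟩
  · intro i
    have : l.get i ∈ Z := by
      rw [← Set.Finite.mem_toFinset hZfin, ← Finset.mem_toList]
      exact List.get_mem l i
    exact this.2
  · intro i
    have : l.get i ∈ Z := by
      rw [← Set.Finite.mem_toFinset hZfin, ← Finset.mem_toList]
      exact List.get_mem l i
    exact this.1
  · intro p hp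
    obtain ⟨q, hqi, hqs, hqd⟩ := exists_integer_point_near hn1 hn2 hp
    have hq : q ∈ l := Finset.mem_toList.2 ((Set.Finite.mem_toFinset hZfin).2 ⟨hqi, hqs⟩)
    obtain ⟨i, hi⟩ := List.mem_iff_get.1 hq
    refine mem_iUnion.2 ⟨i, ?_⟩
    have : dist p (l.get i) < (d:ℝ) + 1 := by rw [hi]; exact lt_of_le_of_lt hqd sqrt_d_lt
    exact mem_ball.2 this


end Stmt11Aux

namespace Stmt11Aux
variable {d : ℕ}

lemma nuP_le_bound {s : ℝ} (hs : 0 ≤ s) (n : ℕ) (E : Set (EuclideanSpace ℝ (Fin d))) :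
    nuP s n E ≤ ENNReal.ofReal ((2:ℝ)^s) := by
  cases n with
  | zero =>
    rw [nuP_def]
    refine le_trans (sInf_le ⟨1, fun _ => 0, fun _ => 2, ⟨?_, ?_, ?_, ?_⟩, rfl⟩) (le_of_eq ?_)
    · intro i; exact mem_shell_zero.2 (by simp)
    · intro i j; exact ⟨0, by simp⟩
    · intro i; norm_num
    · intro p hp
      refine mem_iUnion.2 ⟨0, ?_⟩
      have h1 := mem_shell_zero.1 hp.2
      rw [mem_ball_zero_iff]
      push_cast
      linarith
    · rw [Fin.sum_univ_one]
      norm_num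
  | succ k =>
    cases d with
    | zero =>
      have hempty : E ∩ shell (EuclideanSpace ℝ (Fin 0)) (k+1) = ∅ := by
        apply eq_empty_of_forall_notMem
        rintro x ⟨-, hx⟩
        have hx2 := (mem_shell_succ.1 hx).2
        have hx0 : x = 0 := Subsingleton.elim x 0
        rw [hx0, norm_zero] at hx2
        have hpow : (0:ℝ) < 2^k := by positivity
        linarith
      rw [nuP_of_inter_empty hempty]; exact zero_le
    | succ e =>
      rw [nuP_def]
      set c : EuclideanSpace ℝ (Fin (e+1)) := EuclideanSpace.single 0 ((2:ℝ)^k) with hcdef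
      have hcn : ‖c‖ = 2^k := by
        rw [hcdef, EuclideanSpace.norm_single, Real.norm_eq_abs]
        exact abs_of_nonneg (by positivity)
      have hp0 : (0:ℝ) < 2^k := by positivity
      have hpow : (2:ℝ)^k < 2^(k+1) := by rw [pow_succ]; linarith
      refine le_trans (sInf_le ⟨1, fun _ => c, fun _ => 2^(k+2), ⟨?_, ?_, ?_, ?_⟩, rfl⟩)
        (le_of_eq ?_)
      · intro i
        exact mem_shell_succ.2 ⟨by rw [hcn]; exact hpow, le_of_eq hcn.symm⟩
      · intro i j
        refine ⟨if j = 0 then 2^k else 0, ?_⟩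
        show EuclideanSpace.single 0 ((2:ℝ)^k) j = _
        rw [EuclideanSpace.single_apply]
        split <;> push_cast <;> simp
      · intro i; exact Nat.one_le_two_pow
      · intro p hp
        refine mem_iUnion.2 ⟨0, ?_⟩
        rw [mem_ball]
        have h1 : ‖p‖ < 2^(k+1) := (mem_shell_succ.1 hp.2).1
        have h2 : dist p c ≤ ‖p‖ + ‖c‖ := by rw [dist_eq_norm]; exact norm_sub_le p c
        have h3 : ((2^(k+2):ℕ):ℝ) = 2^(k+2) := by push_cast; ring
        rw [h3]
        have e1 : (2:ℝ)^(k+1) = 2^k*2 := pow_succ 2 k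
        have e2 : (2:ℝ)^(k+2) = 2^(k+1)*2 := pow_succ 2 (k+1)
        rw [hcn] at h2
        linarith
      · rw [Fin.sum_univ_one]
        have h4 : ((2^(k+2):ℕ):ℝ)/2^(k+1) = 2 := by
          push_cast
          rw [pow_succ]
          field_simp
        rw [h4]

lemma exists_subset_selection {s : ℝ} (E : Set (EuclideanSpace ℝ (Fin d))) {n : ℕ}
    (hn1 : 1 ≤ n) (hn2 : 2 * Real.sqrt d ≤ (2:ℝ)^(n-1)) {lam : ℝ≥0∞}
    (hlam : lam ≤ nuP s n E) :
    ∃ G, G ⊆ E ∩ shell (EuclideanSpace ℝ (Fin d)) n ∧ lam ≤ nuP s n G ∧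
      nuP s n G ≤ lam + ENNReal.ofReal ((((d:ℝ)+1)/2^n)^s) := by
  classical
  obtain ⟨M, q, hq1, hq2, hq3⟩ := exists_finite_cover (d := d) hn1 hn2
  set c := ENNReal.ofReal ((((d:ℝ)+1)/2^n)^s) with hc
  have hcast : (((d+1:ℕ)):ℝ) = (d:ℝ)+1 := by push_cast; ring
  set Fj : ℕ → Set (EuclideanSpace ℝ (Fin d)) := fun j =>
    E ∩ shell (EuclideanSpace ℝ (Fin d)) n ∩
      ⋃ (i : Fin M) (_ : (i:ℕ) < j), Metric.ball (q i) ((d:ℝ)+1) with hFjdef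
  have hFj0 : nuP s n (Fj 0) = 0 := by
    apply nuP_of_inter_empty
    apply eq_empty_of_forall_notMem
    rintro x ⟨⟨-, hU⟩, -⟩
    obtain ⟨_, ⟨i, rfl⟩, _, ⟨hi, rfl⟩, -⟩ := hU
    exact Nat.not_lt_zero _ hi
  have hstep : ∀ j, nuP s n (Fj (j+1)) ≤ nuP s n (Fj j) + c := by
    intro j
    by_cases hj : j < M
    · have hB : Fj (j+1) ∩ shell (EuclideanSpace ℝ (Fin d)) n ⊆
          (Fj j ∩ shell (EuclideanSpace ℝ (Fin d)) n) ∪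
            Metric.ball (q ⟨j, hj⟩) (((d+1:ℕ)):ℝ) := by
        rintro x ⟨⟨⟨hE, hsh⟩, hU⟩, -⟩
        obtain ⟨_, ⟨i, rfl⟩, _, ⟨hi, rfl⟩, hball⟩ := hU
        rcases Nat.lt_succ_iff_lt_or_eq.1 hi with hi' | hi'
        · exact Or.inl ⟨⟨⟨hE, hsh⟩, mem_iUnion₂.2 ⟨i, hi', hball⟩⟩, hsh⟩
        · right
          rw [hcast]
          have hieq : i = ⟨j, hj⟩ := Fin.ext hi'
          have hball' : x ∈ Metric.ball (q i) ((d:ℝ)+1) := hball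
          rwa [hieq] at hball'
      have := nuP_union_ball (s := s) (hq1 ⟨j, hj⟩) (hq2 ⟨j, hj⟩)
        (Nat.le_add_left 1 d) hB
      rwa [hcast] at this
    · have heq : Fj (j+1) = Fj j := by
        apply subset_antisymm
        · rintro x ⟨⟨hE, hsh⟩, hU⟩
          obtain ⟨_, ⟨i, rfl⟩, _, ⟨hi, rfl⟩, hball⟩ := hU
          have : (i:ℕ) < j := lt_of_lt_of_le i.isLt (not_lt.1 hj)
          exact ⟨⟨hE, hsh⟩, mem_iUnion₂.2 ⟨i, this, hball⟩⟩
        · rintro x ⟨⟨hE, hsh⟩, hU⟩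
          obtain ⟨_, ⟨i, rfl⟩, _, ⟨hi, rfl⟩, hball⟩ := hU
          exact ⟨⟨hE, hsh⟩, mem_iUnion₂.2 ⟨i, Nat.lt_succ_of_lt hi, hball⟩⟩
      rw [heq]
      exact le_self_add
  have hMeq : Fj M ∩ shell (EuclideanSpace ℝ (Fin d)) n = E ∩ shell (EuclideanSpace ℝ (Fin d)) n := by
    apply subset_antisymm
    · rintro x ⟨⟨hx, -⟩, -⟩
      exact hx
    · intro x hx
      refine ⟨⟨hx, ?_⟩, hx.2⟩
      obtain ⟨_, ⟨i, rfl⟩, hball⟩ := hq3 hx.2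
      exact mem_iUnion₂.2 ⟨i, i.isLt, hball⟩
  have hex : ∃ j, lam ≤ nuP s n (Fj j) := ⟨M, by rw [nuP_congr hMeq]; exact hlam⟩
  set j0 := Nat.find hex with hj0
  refine ⟨Fj j0, inter_subset_left, Nat.find_spec hex, ?_⟩
  rcases Nat.eq_zero_or_pos j0 with h0 | hpos
  · rw [h0, hFj0]
    exact zero_le
  · obtain ⟨jj, hjj⟩ : ∃ jj, j0 = jj + 1 := ⟨j0-1, (Nat.succ_pred_eq_of_pos hpos).symm⟩
    have hmin : ¬ lam ≤ nuP s n (Fj jj) := Nat.find_min hex (by omega)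
    calc nuP s n (Fj j0) = nuP s n (Fj (jj+1)) := by rw [hjj]
    _ ≤ nuP s n (Fj jj) + c := hstep jj
    _ ≤ lam + c := add_le_add_left (not_le.1 hmin).le _

lemma tsum_le_of_range {f : ℕ → ℝ≥0∞} {c : ℝ≥0∞}
    (h : ∀ K, ∑ i ∈ Finset.range K, f i ≤ c) : ∑' i, f i ≤ c := by
  rw [ENNReal.tsum_eq_iSup_sum]
  refine iSup_le fun S => ?_
  have hsub : S ⊆ Finset.range ((S.sup id) + 1) :=
    fun x hx => Finset.mem_range.2 (Nat.lt_succ_of_le (Finset.le_sup (f := id) hx))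
  exact le_trans (Finset.sum_le_sum_of_subset hsub) (h _)

lemma tsum_ofReal_eq_top {f : ℕ → ℝ} (h0 : ∀ i, 0 ≤ f i) (h : ¬ Summable f) :
    ∑' i, ENNReal.ofReal (f i) = ⊤ := by
  by_contra hne
  apply h
  have h1 := ENNReal.summable_toReal hne
  have h2 : (fun i => (ENNReal.ofReal (f i)).toReal) = f :=
    funext fun i => ENNReal.toReal_ofReal (h0 i)
  rwa [h2] at h1

lemma eq_top_of_nat_le {x : ℝ≥0∞} (h : ∀ K : ℕ, (K:ℝ≥0∞) ≤ x) : x = ⊤ := by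
  by_contra hx
  obtain ⟨K, hK⟩ := ENNReal.exists_nat_gt hx
  exact absurd (h K) (not_le.2 hK)

noncomputable def pexp (q : ℕ) : ℝ := 1 + 1/(q+1)

lemma one_lt_pexp (q : ℕ) : 1 < pexp q := by
  have h : 0 < 1/((q:ℝ)+1) := by positivity
  unfold pexp
  linarith

lemma pexp_pos (q : ℕ) : 0 < pexp q := lt_trans one_pos (one_lt_pexp q)

noncomputable def useq (q i : ℕ) : ℝ≥0∞ := ENNReal.ofReal (1 / ((i:ℝ)+1) ^ pexp q)
noncomputable def Sseq (q : ℕ) : ℝ≥0∞ := ∑' i, useq q i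
noncomputable def cseq (q : ℕ) : ℝ≥0∞ := ((2:ℝ≥0∞)^q)⁻¹ * (max 1 (Sseq q))⁻¹
noncomputable def wseq (k : ℕ) : ℝ≥0∞ := cseq k.unpair.1 * useq k.unpair.1 k.unpair.2

lemma summable_base {r : ℝ} (hr : 1 < r) : Summable (fun i : ℕ => 1 / ((i:ℝ)+1) ^ r) := by
  have h := Real.summable_one_div_nat_rpow.2 hr
  have h2 := (summable_nat_add_iff 1).2 h
  exact h2.congr fun i => by push_cast; rfl

lemma not_summable_base {r : ℝ} (hr : r ≤ 1) : ¬ Summable (fun i : ℕ => 1 / ((i:ℝ)+1) ^ r) := by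
  intro hcon
  have h2 : Summable (fun n : ℕ => 1 / ((n+1:ℕ):ℝ) ^ r) := hcon.congr fun i => by push_cast; rfl
  have h3 := (summable_nat_add_iff (f := fun n : ℕ => 1 / (n:ℝ) ^ r) 1).1 h2
  exact absurd (Real.summable_one_div_nat_rpow.1 h3) (not_lt.2 hr)

lemma Sseq_ne_top (q : ℕ) : Sseq q ≠ ⊤ := by
  unfold Sseq useq
  rw [← ENNReal.ofReal_tsum_of_nonneg (fun i => by positivity) (summable_base (one_lt_pexp q))]
  exact ENNReal.ofReal_ne_top

lemma max_ne_top (q : ℕ) : max 1 (Sseq q) ≠ ⊤ := by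
  rw [Ne, max_eq_top]
  push_neg
  exact ⟨ENNReal.one_ne_top, Sseq_ne_top q⟩

lemma useq_le_one (q i : ℕ) : useq q i ≤ 1 := by
  unfold useq
  apply ENNReal.ofReal_le_one.2
  rw [div_le_one (by positivity)]
  have hi0 : (0:ℝ) ≤ (i:ℝ) := Nat.cast_nonneg i
  calc (1:ℝ) = ((i:ℝ)+1)^(0:ℝ) := (Real.rpow_zero _).symm
  _ ≤ ((i:ℝ)+1)^(pexp q) := Real.rpow_le_rpow_of_exponent_le (by linarith) (pexp_pos q).le

lemma useq_pos (q i : ℕ) : 0 < useq q i := ENNReal.ofReal_pos.2 (by positivity)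

lemma cseq_pos (q : ℕ) : 0 < cseq q := by
  apply ENNReal.mul_pos
  · exact (ENNReal.inv_ne_zero.2 (ENNReal.pow_ne_top ENNReal.ofNat_ne_top))
  · exact (ENNReal.inv_ne_zero.2 (max_ne_top q))

lemma cseq_le_one (q : ℕ) : cseq q ≤ 1 := by
  apply mul_le_one'
  · exact ENNReal.inv_le_one.2 (one_le_pow_of_one_le' (by norm_num : (1:ℝ≥0∞) ≤ 2) q)
  · exact ENNReal.inv_le_one.2 (le_max_left _ _)

lemma wseq_le_one (k : ℕ) : wseq k ≤ 1 := mul_le_one' (cseq_le_one _) (useq_le_one _ _)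

lemma wseq_pos (k : ℕ) : 0 < wseq k :=
  ENNReal.mul_pos (cseq_pos _).ne' (useq_pos _ _).ne'

lemma tsum_wseq_ne_top : ∑' k, wseq k ≠ ⊤ := by
  have h1 : ∑' k, wseq k = ∑' p : ℕ × ℕ, wseq (Nat.pairEquiv p) :=
    (Equiv.tsum_eq Nat.pairEquiv wseq).symm
  have h2 : ∀ p : ℕ × ℕ, wseq (Nat.pairEquiv p) = cseq p.1 * useq p.1 p.2 := by
    rintro ⟨a, b⟩
    show wseq (Nat.pair a b) = _
    unfold wseq
    rw [Nat.unpair_pair]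
  rw [h1, tsum_congr h2, ENNReal.tsum_prod (f := fun a b => cseq a * useq a b)]
  have h3 : ∀ a : ℕ, ∑' b, cseq a * useq a b = cseq a * Sseq a := fun a => ENNReal.tsum_mul_left
  rw [tsum_congr h3]
  have h4 : ∀ a : ℕ, cseq a * Sseq a ≤ ((2:ℝ≥0∞)^a)⁻¹ := by
    intro a
    unfold cseq
    rw [mul_assoc]
    apply mul_le_of_le_one_right'
    calc (max 1 (Sseq a))⁻¹ * Sseq a ≤ (max 1 (Sseq a))⁻¹ * max 1 (Sseq a) := by
          gcongr; exact le_max_right _ _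
    _ = 1 := ENNReal.inv_mul_cancel (lt_of_lt_of_le one_pos (le_max_left _ _)).ne' (max_ne_top a)
  have h5 := Summable.tsum_le_tsum h4 ENNReal.summable ENNReal.summable
  have h6 : ∑' a : ℕ, ((2:ℝ≥0∞)^a)⁻¹ = (1 - 2⁻¹)⁻¹ := by
    have he : ∀ a : ℕ, ((2:ℝ≥0∞)^a)⁻¹ = (2⁻¹:ℝ≥0∞)^a := fun a => by rw [← ENNReal.inv_pow]
    rw [tsum_congr he]
    exact ENNReal.tsum_geometric 2⁻¹
  apply ne_top_of_le_ne_top _ (h5.trans_eq h6)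
  apply ENNReal.inv_ne_top.2
  have : (2⁻¹:ℝ≥0∞) < 1 := ENNReal.inv_lt_one.2 one_lt_two
  exact (tsub_pos_iff_lt.2 this).ne'

lemma tsum_wseq_rpow_eq_top {θ : ℝ} (h0 : 0 ≤ θ) (h1 : θ < 1) : ∑' k, (wseq k)^θ = ⊤ := by
  obtain ⟨q, hq⟩ := exists_nat_ge (1/(1-θ))
  have hθ : 0 < 1 - θ := by linarith
  have ha : (0:ℝ) < 1/((q:ℝ)+1) := by positivity
  have hq1 : 1/((q:ℝ)+1) ≤ 1 - θ := by
    rw [div_le_iff₀ (by positivity)]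
    rw [div_le_iff₀ hθ] at hq
    nlinarith
  have hpq : pexp q * θ ≤ 1 := by
    unfold pexp
    nlinarith
  have hinj : Function.Injective (fun i : ℕ => Nat.pair q i) := by
    intro i j hij
    have h := congrArg Nat.unpair hij
    simpa [Nat.unpair_pair] using h
  have hle := ENNReal.tsum_comp_le_tsum_of_injective hinj (fun k => (wseq k)^θ)
  have hrw : ∀ i : ℕ, (wseq (Nat.pair q i))^θ
      = (cseq q)^θ * ENNReal.ofReal (1/((i:ℝ)+1)^(pexp q * θ)) := by
    intro i
    have hval : wseq (Nat.pair q i) = cseq q * useq q i := by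
      unfold wseq; rw [Nat.unpair_pair]
    rw [hval, ENNReal.mul_rpow_of_nonneg _ _ h0]
    congr 1
    unfold useq
    rw [ENNReal.ofReal_rpow_of_nonneg (by positivity) h0]
    congr 1
    have hb : (0:ℝ) ≤ ((i:ℝ)+1) := by positivity
    rw [one_div, one_div, Real.inv_rpow (Real.rpow_nonneg hb _), ← Real.rpow_mul hb]
  have hsum : ∑' i : ℕ, (wseq (Nat.pair q i))^θ
      = (cseq q)^θ * ∑' i : ℕ, ENNReal.ofReal (1/((i:ℝ)+1)^(pexp q * θ)) := by
    rw [tsum_congr hrw]; exact ENNReal.tsum_mul_left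
  have hdiv : ∑' i : ℕ, ENNReal.ofReal (1/((i:ℝ)+1)^(pexp q * θ)) = ⊤ :=
    tsum_ofReal_eq_top (fun i => by positivity) (not_summable_base hpq)
  have hcne : cseq q ≠ ⊤ := (lt_of_le_of_lt (cseq_le_one q) ENNReal.one_lt_top).ne
  have hcpos : (0:ℝ≥0∞) < (cseq q)^θ := ENNReal.rpow_pos (cseq_pos q) hcne
  have htop : ∑' i : ℕ, (wseq (Nat.pair q i))^θ = ⊤ := by
    rw [hsum, hdiv, ENNReal.mul_top hcpos.ne']
  exact top_le_iff.1 (htop ▸ hle)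

end Stmt11Aux

/-- Existence of macroscopic `s`-sets: if `ν^s(E) = ∞` then `E` contains a subset `F`
with macroscopic Hausdorff dimension `s` and `ν^s(F) < ∞`. -/
theorem stmt11 (d : ℕ) (s : ℝ) (hs : 0 ≤ s) (E : Set (EuclideanSpace ℝ (Fin d)))
    (h : ∑' n, nuP s n E = ⊤) :
    ∃ F ⊆ E, sInf { t : ℝ | 0 ≤ t ∧ ∑' n, nuP t n F < ⊤ } = s ∧
      ∑' n, nuP s n F < ⊤ := by
  classical
  rcases eq_or_lt_of_le hs with hs0 | hs_pos
  · -- degenerate case s = 0 : take F = ∅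
    have hzero : ∀ (t : ℝ) (n : ℕ), nuP t n (∅ : Set (EuclideanSpace ℝ (Fin d))) = 0 :=
      fun t n => Stmt11Aux.nuP_empty
    refine ⟨∅, empty_subset E, ?_, ?_⟩
    · have hset : { t : ℝ | 0 ≤ t ∧ ∑' n, nuP t n (∅ : Set (EuclideanSpace ℝ (Fin d))) < ⊤ }
          = Set.Ici 0 := by
        ext t
        simp only [Set.mem_setOf_eq, Set.mem_Ici, and_iff_left_iff_imp]
        intro _
        rw [tsum_congr (hzero t)]
        simp
      rw [hset, csInf_Ici]
      exact hs0
    · rw [tsum_congr (hzero s)]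
      simp
  -- main case 0 < s
  set B := ENNReal.ofReal ((2:ℝ)^s) with hBdef
  have hB_ne_top : B ≠ ⊤ := ENNReal.ofReal_ne_top
  set a : ℕ → ℝ≥0∞ := fun n => nuP s n E with hadef
  have hbound : ∀ n, a n ≤ B := fun n => Stmt11Aux.nuP_le_bound hs n E
  have ha_ne_top : ∀ n, a n ≠ ⊤ :=
    fun n => (lt_of_le_of_lt (hbound n) (lt_top_iff_ne_top.2 hB_ne_top)).ne
  have hnext : ∀ N : ℕ, ∃ M, N < M ∧ 1 ≤ ∑ i ∈ Finset.Ico N M, a i := by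
    intro N
    have hfin : ∑ i ∈ Finset.range N, a i ≠ ⊤ :=
      (ENNReal.sum_lt_top.2 fun i _ => lt_top_iff_ne_top.2 (ha_ne_top i)).ne
    by_contra hcon
    push_neg at hcon
    have hub : ∀ S : Finset ℕ, ∑ i ∈ S, a i ≤ ∑ i ∈ Finset.range N, a i + 1 := by
      intro S
      set M' := max (S.sup id + 1) (N + 1) with hM'
      have hS : S ⊆ Finset.range M' := fun x hx => Finset.mem_range.2
        (lt_of_lt_of_le (Nat.lt_succ_of_le (Finset.le_sup (f := id) hx)) (le_max_left _ _))
      have hNM : N ≤ M' := le_trans (Nat.le_succ N) (le_max_right _ _)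
      have hsplit : ∑ i ∈ Finset.range N, a i + ∑ i ∈ Finset.Ico N M', a i
          = ∑ i ∈ Finset.range M', a i := by
        rw [Finset.range_eq_Ico, Finset.range_eq_Ico]
        exact Finset.sum_Ico_consecutive a (Nat.zero_le N) hNM
      have htail : ∑ i ∈ Finset.Ico N M', a i ≤ 1 :=
        (hcon M' (lt_of_lt_of_le (Nat.lt_succ_self N) (le_max_right _ _))).le
      calc ∑ i ∈ S, a i ≤ ∑ i ∈ Finset.range M', a i := Finset.sum_le_sum_of_subset hS
      _ = ∑ i ∈ Finset.range N, a i + ∑ i ∈ Finset.Ico N M', a i := hsplit.symm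
      _ ≤ ∑ i ∈ Finset.range N, a i + 1 := add_le_add_right htail _
    have htot : ∑' n, a n ≤ ∑ i ∈ Finset.range N, a i + 1 := by
      rw [ENNReal.tsum_eq_iSup_sum]; exact iSup_le hub
    rw [h] at htot
    exact (ENNReal.add_ne_top.2 ⟨hfin, ENNReal.one_ne_top⟩) (top_le_iff.1 htot)
  have hnext' : ∀ N : ℕ, ∃ M, (N < M ∧ 1 ≤ ∑ i ∈ Finset.Ico N M, a i) ∧
      ∑ i ∈ Finset.Ico N M, a i ≤ 1 + B := by
    intro N
    obtain ⟨M0, hM0⟩ := hnext N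
    have hexP : ∃ M, N < M ∧ 1 ≤ ∑ i ∈ Finset.Ico N M, a i := ⟨M0, hM0⟩
    set M := Nat.find hexP with hMdef
    have hspec : N < M ∧ 1 ≤ ∑ i ∈ Finset.Ico N M, a i := Nat.find_spec hexP
    have hminM : ∀ m', m' < M → ¬ (N < m' ∧ 1 ≤ ∑ i ∈ Finset.Ico N m', a i) :=
      fun m' hm' => Nat.find_min hexP (hMdef ▸ hm')
    clear_value M
    refine ⟨M, hspec, ?_⟩
    rcases eq_or_lt_of_le (Nat.succ_le_of_lt hspec.1) with heq | hlt
    · have hsing : Finset.Ico N M = {N} := by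
        ext x
        simp only [Finset.mem_Ico, Finset.mem_singleton]
        omega
      rw [hsing, Finset.sum_singleton]
      exact le_trans (hbound N) le_add_self
    · have hM1 : N < M - 1 := by omega
      have hmin := hminM (M - 1) (by omega)
      have hlt1 : ∑ i ∈ Finset.Ico N (M-1), a i < 1 := by
        rcases not_and_or.1 hmin with h' | h'
        · exact absurd hM1 h'
        · exact not_le.1 h'
      have hsplit : ∑ i ∈ Finset.Ico N M, a i
          = ∑ i ∈ Finset.Ico N (M-1), a i + a (M-1) := by
        rw [← Finset.sum_Ico_succ_top (by omega : N ≤ M - 1)]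
        congr 1
        rw [Nat.sub_add_cancel (by omega : 1 ≤ M)]
      rw [hsplit]
      exact add_le_add hlt1.le (hbound _)
  -- blocks
  obtain ⟨m, hm0, hmsucc⟩ : ∃ m : ℕ → ℕ, m 0 = d + 2 ∧
      ∀ k, m (k+1) = (hnext' (m k)).choose :=
    ⟨fun k => Nat.rec (motive := fun _ => ℕ) (d + 2) (fun _ prev => (hnext' prev).choose) k,
      rfl, fun k => rfl⟩
  have hmlt : ∀ k, m k < m (k+1) := fun k => by
    rw [hmsucc]; exact (hnext' (m k)).choose_spec.1.1
  have hm_mono : StrictMono m := strictMono_nat_of_lt_succ hmlt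
  have hblock_ge : ∀ k, 1 ≤ ∑ i ∈ Finset.Ico (m k) (m (k+1)), a i := fun k => by
    rw [hmsucc]; exact (hnext' (m k)).choose_spec.1.2
  have hblock_le : ∀ k, ∑ i ∈ Finset.Ico (m k) (m (k+1)), a i ≤ 1 + B := fun k => by
    rw [hmsucc]; exact (hnext' (m k)).choose_spec.2
  have hm_ge : ∀ k, d + 2 ≤ m k := fun k =>
    le_trans (le_of_eq hm0.symm) (hm_mono.monotone (Nat.zero_le k))
  have huniq : ∀ k k' n : ℕ, m k ≤ n → n < m (k+1) → m k' ≤ n → n < m (k'+1) → k = k' := by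
    intro k k' n h1 h2 h3 h4
    by_contra hne
    rcases Nat.lt_or_ge k k' with hlt | hge
    · have hle : m (k+1) ≤ m k' := hm_mono.monotone hlt
      omega
    · have hlt2 : k' < k := by omega
      have hle : m (k'+1) ≤ m k := hm_mono.monotone hlt2
      omega
  set lam : ℕ → ℝ≥0∞ := fun n =>
    if hn : ∃ k, m k ≤ n ∧ n < m (k+1) then Stmt11Aux.wseq hn.choose * a n else 0 with hlamdef
  have hlam_blk : ∀ k n, m k ≤ n → n < m (k+1) → lam n = Stmt11Aux.wseq k * a n := by
    intro k n h1 h2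
    have hex : ∃ k, m k ≤ n ∧ n < m (k+1) := ⟨k, h1, h2⟩
    simp only [hlamdef]
    rw [dif_pos hex]
    have := huniq hex.choose k n hex.choose_spec.1 hex.choose_spec.2 h1 h2
    rw [this]
  have hlam_le : ∀ n, lam n ≤ a n := by
    intro n
    simp only [hlamdef]
    split
    · next hn =>
      calc Stmt11Aux.wseq hn.choose * a n ≤ 1 * a n :=
            mul_le_mul_left (Stmt11Aux.wseq_le_one _) _
      _ = a n := one_mul _
    · exact zero_le
  have hlam_zero : ∀ n, n < d + 2 → lam n = 0 := by
    intro n hn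
    simp only [hlamdef]
    rw [dif_neg]
    rintro ⟨k, hk1, -⟩
    exact absurd (le_trans (hm_ge k) hk1) (by omega)
  -- goodness of shells beyond d+2
  have hgood : ∀ n, d + 2 ≤ n → 1 ≤ n ∧ 2 * Real.sqrt d ≤ (2:ℝ)^(n-1) := by
    intro n hn
    refine ⟨by omega, ?_⟩
    have h2 : (d:ℝ) ≤ 2^d := by exact_mod_cast (Nat.lt_two_pow_self (n := d)).le
    have h3 : (1:ℝ) ≤ 2^d := by exact_mod_cast Nat.one_le_two_pow
    have h4 : Real.sqrt d ≤ 2^d := by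
      rw [show ((2:ℝ)^d) = Real.sqrt (((2:ℝ)^d)^2) from (Real.sqrt_sq (by positivity)).symm]
      apply Real.sqrt_le_sqrt
      nlinarith
    have h5 : (2:ℝ)^(d+1) ≤ 2^(n-1) := pow_le_pow_right₀ one_le_two (by omega)
    rw [pow_succ] at h5
    linarith
  -- per-shell selection
  set cst : ℕ → ℝ≥0∞ := fun n => ENNReal.ofReal ((((d:ℝ)+1)/2^n)^s) with hcstdef
  have hsel : ∀ n, ∃ G, G ⊆ E ∩ shell (EuclideanSpace ℝ (Fin d)) n ∧ lam n ≤ nuP s n G ∧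
      nuP s n G ≤ lam n + cst n := by
    intro n
    by_cases hn : d + 2 ≤ n
    · exact Stmt11Aux.exists_subset_selection E (hgood n hn).1 (hgood n hn).2 (hlam_le n)
    · refine ⟨∅, empty_subset _, ?_, ?_⟩
      · rw [hlam_zero n (by omega), Stmt11Aux.nuP_empty]
      · rw [Stmt11Aux.nuP_empty]; exact zero_le
  set Fn : ℕ → Set (EuclideanSpace ℝ (Fin d)) := fun n => (hsel n).choose with hFndef
  have hFn1 : ∀ n, Fn n ⊆ E ∩ shell (EuclideanSpace ℝ (Fin d)) n := fun n => (hsel n).choose_spec.1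
  have hFn2 : ∀ n, lam n ≤ nuP s n (Fn n) := fun n => (hsel n).choose_spec.2.1
  have hFn3 : ∀ n, nuP s n (Fn n) ≤ lam n + cst n := fun n => (hsel n).choose_spec.2.2
  set F : Set (EuclideanSpace ℝ (Fin d)) := ⋃ n, Fn n with hFdef
  have hFE : F ⊆ E := iUnion_subset (fun n => (hFn1 n).trans inter_subset_left)
  have hFsh : ∀ n, F ∩ shell (EuclideanSpace ℝ (Fin d)) n
      = Fn n ∩ shell (EuclideanSpace ℝ (Fin d)) n := by
    intro n
    apply subset_antisymm
    · rintro x ⟨hx1, hx2⟩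
      obtain ⟨_, ⟨j, rfl⟩, hxj⟩ := hx1
      rcases Nat.lt_trichotomy j n with hjn | rfl | hjn
      · have hdisj := Stmt11Aux.shell_disjoint (X' := EuclideanSpace ℝ (Fin d)) hjn
        have hmem : x ∈ shell (EuclideanSpace ℝ (Fin d)) j ∩ shell (EuclideanSpace ℝ (Fin d)) n :=
          ⟨(hFn1 j hxj).2, hx2⟩
        exact absurd hmem (by rw [hdisj]; exact notMem_empty x)
      · exact ⟨hxj, hx2⟩
      · have hdisj := Stmt11Aux.shell_disjoint (X' := EuclideanSpace ℝ (Fin d)) hjn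
        have hmem : x ∈ shell (EuclideanSpace ℝ (Fin d)) n ∩ shell (EuclideanSpace ℝ (Fin d)) j :=
          ⟨hx2, (hFn1 j hxj).2⟩
        exact absurd hmem (by rw [hdisj]; exact notMem_empty x)
    · rintro x ⟨hx1, hx2⟩
      exact ⟨mem_iUnion.2 ⟨n, hx1⟩, hx2⟩
  have hnuF : ∀ (t : ℝ) (n : ℕ), nuP t n F = nuP t n (Fn n) :=
    fun t n => Stmt11Aux.nuP_congr (hFsh n)
  -- regrouping finite sums along blocks
  have hregroup : ∀ (f : ℕ → ℝ≥0∞) (K : ℕ), ∑ n ∈ Finset.range (m K), f n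
      = ∑ n ∈ Finset.range (m 0), f n
        + ∑ k ∈ Finset.range K, ∑ n ∈ Finset.Ico (m k) (m (k+1)), f n := by
    intro f K
    induction K with
    | zero => simp
    | succ K ih =>
      have hsplit : ∑ n ∈ Finset.range (m K), f n + ∑ n ∈ Finset.Ico (m K) (m (K+1)), f n
          = ∑ n ∈ Finset.range (m (K+1)), f n := by
        rw [Finset.range_eq_Ico, Finset.range_eq_Ico]
        exact Finset.sum_Ico_consecutive f (Nat.zero_le _) (hm_mono.monotone (Nat.le_succ K))
      rw [← hsplit, ih, Finset.sum_range_succ, add_assoc]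
  -- finiteness of ∑ nuP s n F
  have hcst_eq : ∀ n : ℕ, cst n
      = ENNReal.ofReal (((d:ℝ)+1)^s) * (ENNReal.ofReal ((2:ℝ)⁻¹ ^ s))^n := by
    intro n
    simp only [hcstdef]
    have hd1 : (0:ℝ) ≤ (d:ℝ)+1 := by positivity
    have hsplit : (((d:ℝ)+1)/2^n)^s = ((d:ℝ)+1)^s * ((2:ℝ)⁻¹^s)^n := by
      rw [div_eq_mul_inv, Real.mul_rpow hd1 (by positivity)]
      congr 1
      rw [← inv_pow, ← Real.rpow_natCast ((2:ℝ)⁻¹) n, ← Real.rpow_mul (by norm_num),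
        mul_comm, Real.rpow_mul (by norm_num), Real.rpow_natCast]
    rw [hsplit, ENNReal.ofReal_mul (by positivity), ENNReal.ofReal_pow (by positivity)]
  have hcst_ne : ∑' n, cst n ≠ ⊤ := by
    rw [tsum_congr hcst_eq, ENNReal.tsum_mul_left]
    apply ENNReal.mul_ne_top ENNReal.ofReal_ne_top
    rw [ENNReal.tsum_geometric]
    apply ENNReal.inv_ne_top.2
    have hρ : ENNReal.ofReal ((2:ℝ)⁻¹ ^ s) < 1 := by
      rw [← ENNReal.ofReal_one]
      exact (ENNReal.ofReal_lt_ofReal_iff one_pos).2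
        (Real.rpow_lt_one (by norm_num) (by norm_num) hs_pos)
    exact (tsub_pos_of_lt hρ).ne'
  set W := ∑' k, Stmt11Aux.wseq k with hW
  have hWne : W ≠ ⊤ := Stmt11Aux.tsum_wseq_ne_top
  have hlam_ne : ∑' n, lam n ≠ ⊤ := by
    have hbK : ∀ K, ∑ n ∈ Finset.range K, lam n ≤ W * (1 + B) := by
      intro K
      have h1 : ∑ n ∈ Finset.range K, lam n ≤ ∑ n ∈ Finset.range (m K), lam n :=
        Finset.sum_le_sum_of_subset (by
          intro x hx
          rw [Finset.mem_range] at *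
          exact lt_of_lt_of_le hx hm_mono.le_apply)
      have h2 : ∑ n ∈ Finset.range (m 0), lam n = 0 :=
        Finset.sum_eq_zero (fun n hn => hlam_zero n (by
          have := Finset.mem_range.1 hn
          omega))
      have h3 : ∀ k, ∑ n ∈ Finset.Ico (m k) (m (k+1)), lam n ≤ Stmt11Aux.wseq k * (1 + B) := by
        intro k
        have he : ∀ n ∈ Finset.Ico (m k) (m (k+1)), lam n = Stmt11Aux.wseq k * a n := by
          intro n hn
          rw [Finset.mem_Ico] at hn
          exact hlam_blk k n hn.1 hn.2
        rw [Finset.sum_congr rfl he, ← Finset.mul_sum]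
        exact mul_le_mul_right (hblock_le k) _
      calc ∑ n ∈ Finset.range K, lam n ≤ ∑ n ∈ Finset.range (m K), lam n := h1
      _ = 0 + ∑ k ∈ Finset.range K, ∑ n ∈ Finset.Ico (m k) (m (k+1)), lam n := by
          rw [hregroup lam K, h2]
      _ ≤ ∑ k ∈ Finset.range K, Stmt11Aux.wseq k * (1+B) := by
          rw [zero_add]; exact Finset.sum_le_sum (fun k _ => h3 k)
      _ = (∑ k ∈ Finset.range K, Stmt11Aux.wseq k) * (1+B) := (Finset.sum_mul _ _ _).symm
      _ ≤ W * (1+B) := mul_le_mul_left (ENNReal.sum_le_tsum _) _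
    have hle := Stmt11Aux.tsum_le_of_range hbK
    exact ne_top_of_le_ne_top
      (ENNReal.mul_ne_top hWne (ENNReal.add_ne_top.2 ⟨ENNReal.one_ne_top, hB_ne_top⟩)) hle
  have hfinite : ∑' n, nuP s n F < ⊤ := by
    have hterm : ∀ n, nuP s n F ≤ lam n + cst n := fun n => by
      rw [hnuF s n]; exact hFn3 n
    calc ∑' n, nuP s n F ≤ ∑' n, (lam n + cst n) := ENNReal.tsum_le_tsum hterm
    _ = ∑' n, lam n + ∑' n, cst n := ENNReal.tsum_add
    _ < ⊤ := ENNReal.add_lt_top.2 ⟨lt_top_iff_ne_top.2 hlam_ne, lt_top_iff_ne_top.2 hcst_ne⟩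
  -- divergence below s
  have hdiv : ∀ t : ℝ, 0 ≤ t → t < s → ∑' n, nuP t n F = ⊤ := by
    intro t ht0 hts
    rcases eq_or_lt_of_le ht0 with ht0' | htpos
    · -- t = 0
      have hblk1 : ∀ k, ∃ n, (m k ≤ n ∧ n < m (k+1)) ∧ 1 ≤ nuP t n F := by
        intro k
        have h1 : ∃ n ∈ Finset.Ico (m k) (m (k+1)), a n ≠ 0 := by
          by_contra hcon
          push_neg at hcon
          have hz : ∑ n ∈ Finset.Ico (m k) (m (k+1)), a n = 0 :=
            Finset.sum_eq_zero (fun n hn => hcon n hn)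
          exact absurd (hblock_ge k) (by rw [hz]; simp)
        obtain ⟨n, hn, han⟩ := h1
        rw [Finset.mem_Ico] at hn
        have hlamn : lam n = Stmt11Aux.wseq k * a n := hlam_blk k n hn.1 hn.2
        have hlampos : 0 < lam n := by
          rw [hlamn]
          exact ENNReal.mul_pos (Stmt11Aux.wseq_pos k).ne' han
        have hnupos : 0 < nuP s n (Fn n) := lt_of_lt_of_le hlampos (hFn2 n)
        have hne : (Fn n ∩ shell (EuclideanSpace ℝ (Fin d)) n).Nonempty := by
          by_contra hcon
          rw [not_nonempty_iff_eq_empty] at hcon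
          rw [Stmt11Aux.nuP_of_inter_empty hcon] at hnupos
          exact lt_irrefl 0 hnupos
        refine ⟨n, ⟨hn.1, hn.2⟩, ?_⟩
        rw [hnuF t n, ← ht0']
        exact Stmt11Aux.one_le_nuP_zero hne
      apply Stmt11Aux.eq_top_of_nat_le
      intro K
      have h2 : ∀ k ∈ Finset.range K, 1 ≤ ∑ n ∈ Finset.Ico (m k) (m (k+1)), nuP t n F := by
        intro k _
        obtain ⟨n, ⟨hn1, hn2⟩, hn3⟩ := hblk1 k
        exact le_trans hn3 (Finset.single_le_sum (f := fun n => nuP t n F)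
          (fun _ _ => zero_le) (Finset.mem_Ico.2 ⟨hn1, hn2⟩))
      calc (K:ℝ≥0∞) = ∑ _k ∈ Finset.range K, 1 := by simp
      _ ≤ ∑ k ∈ Finset.range K, ∑ n ∈ Finset.Ico (m k) (m (k+1)), nuP t n F :=
          Finset.sum_le_sum h2
      _ ≤ ∑ n ∈ Finset.range (m 0), nuP t n F
            + ∑ k ∈ Finset.range K, ∑ n ∈ Finset.Ico (m k) (m (k+1)), nuP t n F := le_add_self
      _ = ∑ n ∈ Finset.range (m K), nuP t n F := (hregroup _ K).symm
      _ ≤ ∑' n, nuP t n F := ENNReal.sum_le_tsum _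
    · -- 0 < t < s
      have hθ0 : 0 < t/s := div_pos htpos hs_pos
      have hθ1 : t/s < 1 := (div_lt_one hs_pos).2 hts
      have hblk : ∀ k, (Stmt11Aux.wseq k)^(t/s)
          ≤ ∑ n ∈ Finset.Ico (m k) (m (k+1)), nuP t n F := by
        intro k
        have h1 : ∀ n ∈ Finset.Ico (m k) (m (k+1)),
            (Stmt11Aux.wseq k)^(t/s) * (a n)^(t/s) ≤ nuP t n F := by
          intro n hn
          rw [Finset.mem_Ico] at hn
          have hlamn : lam n = Stmt11Aux.wseq k * a n := hlam_blk k n hn.1 hn.2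
          have heq1 : (Stmt11Aux.wseq k)^(t/s) * (a n)^(t/s) = (lam n)^(t/s) := by
            rw [hlamn, ENNReal.mul_rpow_of_nonneg _ _ hθ0.le]
          calc (Stmt11Aux.wseq k)^(t/s) * (a n)^(t/s) = (lam n)^(t/s) := heq1
          _ ≤ (nuP s n (Fn n))^(t/s) := ENNReal.rpow_le_rpow (hFn2 n) hθ0.le
          _ ≤ nuP t n (Fn n) := Stmt11Aux.rpow_nuP_le htpos hts.le n (Fn n)
          _ = nuP t n F := (hnuF t n).symm
        calc (Stmt11Aux.wseq k)^(t/s) = (Stmt11Aux.wseq k)^(t/s) * 1 := (mul_one _).symm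
        _ ≤ (Stmt11Aux.wseq k)^(t/s) * (∑ n ∈ Finset.Ico (m k) (m (k+1)), a n)^(t/s) := by
            apply mul_le_mul_right
            calc (1:ℝ≥0∞) = 1^(t/s) := (ENNReal.one_rpow _).symm
            _ ≤ (∑ n ∈ Finset.Ico (m k) (m (k+1)), a n)^(t/s) :=
                ENNReal.rpow_le_rpow (hblock_ge k) hθ0.le
        _ ≤ (Stmt11Aux.wseq k)^(t/s) * ∑ n ∈ Finset.Ico (m k) (m (k+1)), (a n)^(t/s) :=
            mul_le_mul_right (Stmt11Aux.sum_rpow_superadd _ _ hθ0 hθ1.le) _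
        _ = ∑ n ∈ Finset.Ico (m k) (m (k+1)), (Stmt11Aux.wseq k)^(t/s) * (a n)^(t/s) :=
            Finset.mul_sum _ _ _
        _ ≤ ∑ n ∈ Finset.Ico (m k) (m (k+1)), nuP t n F := Finset.sum_le_sum h1
      have hKb : ∀ K, ∑ k ∈ Finset.range K, (Stmt11Aux.wseq k)^(t/s) ≤ ∑' n, nuP t n F := by
        intro K
        calc ∑ k ∈ Finset.range K, (Stmt11Aux.wseq k)^(t/s)
            ≤ ∑ k ∈ Finset.range K, ∑ n ∈ Finset.Ico (m k) (m (k+1)), nuP t n F :=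
              Finset.sum_le_sum (fun k _ => hblk k)
        _ ≤ ∑ n ∈ Finset.range (m 0), nuP t n F
              + ∑ k ∈ Finset.range K, ∑ n ∈ Finset.Ico (m k) (m (k+1)), nuP t n F := le_add_self
        _ = ∑ n ∈ Finset.range (m K), nuP t n F := (hregroup _ K).symm
        _ ≤ ∑' n, nuP t n F := ENNReal.sum_le_tsum _
      have h3 := Stmt11Aux.tsum_le_of_range hKb
      rw [Stmt11Aux.tsum_wseq_rpow_eq_top hθ0.le hθ1] at h3
      exact top_le_iff.1 h3
  refine ⟨F, hFE, ?_, hfinite⟩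
  apply IsLeast.csInf_eq
  constructor
  · exact ⟨hs, hfinite⟩
  · rintro t ⟨ht0, htfin⟩
    by_contra hlt
    push_neg at hlt
    rw [hdiv t ht0 hlt] at htfin
    exact absurd htfin (lt_irrefl ⊤)
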